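/- Let Δ ∈ [0,1), c ≥ 0 a constant with e^c Δ < 1, and let (sₙ) be a nonnegative sequence with s₀ = 0 satisfying s_{n+1} ≤ c + log(e^{sₙ} Δ + 1). Then for every n, sₙ ≤ c − log(1 − Δe^c). -/

import Mathlib

/-- Recursion bound: if `0 ≤ Δ < 1`, `c ≥ 0`, `e^c Δ < 1`, and a nonnegative
sequence `s` with `s 0 = 0` satisfies `s(n+1) ≤ c + log(e^{s n} Δ + 1)`, then
`s n ≤ c − log(1 − Δ e^c)` for every `n`. -/
theorem risk_sensitive_iterate_bound
    (Δ c : ℝ) (hΔ0 : 0 ≤ Δ) (hΔ1 : Δ < 1) (hc : 0 ≤ c)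
    (hsmall : Real.exp c * Δ < 1)
    (s : ℕ → ℝ) (hs0 : s 0 = 0) (hpos : ∀ n, 0 ≤ s n)
    (hrec : ∀ n, s (n + 1) ≤ c + Real.log (Real.exp (s n) * Δ + 1)) :
    ∀ n, s n ≤ c - Real.log (1 - Δ * Real.exp c) := by
  have hd : 0 < 1 - Δ * Real.exp c := by nlinarith [Real.exp_pos c]
  have hlog_le : Real.log (1 - Δ * Real.exp c) ≤ 0 :=
    Real.log_nonpos (by linarith) (by nlinarith [Real.exp_pos c])
  intro n
  induction n with
  | zero => rw [hs0]; linarith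
  | succ n ih =>
    have hmono : Real.exp (s n) * Δ + 1 ≤ Real.exp (c - Real.log (1 - Δ * Real.exp c)) * Δ + 1 := by
      have := Real.exp_le_exp.mpr ih
      nlinarith
    have hexp : Real.exp (c - Real.log (1 - Δ * Real.exp c)) = Real.exp c / (1 - Δ * Real.exp c) := by
      rw [Real.exp_sub, Real.exp_log hd]
    have hkey : Real.exp (c - Real.log (1 - Δ * Real.exp c)) * Δ + 1
        = 1 / (1 - Δ * Real.exp c) := by
      rw [hexp, div_mul_eq_mul_div, div_add_one hd.ne']; ring
    have h1 : Real.log (Real.exp (s n) * Δ + 1) ≤ Real.log (1 / (1 - Δ * Real.exp c)) := by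
      rw [← hkey]
      apply Real.log_le_log (by positivity) hmono
    calc s (n + 1) ≤ c + Real.log (Real.exp (s n) * Δ + 1) := hrec n
      _ ≤ c + Real.log (1 / (1 - Δ * Real.exp c)) := by linarith
      _ = c - Real.log (1 - Δ * Real.exp c) := by
          rw [one_div, Real.log_inv]; ring
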